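/- Fix 0 < δ < 1 and ε > 0 with ε(1+ε)² < min{δ, 1−δ}. Let G be a probability measure on a compact interval, let T ⊂ T' be nested non-degenerate compact intervals with G(T) > 0, G(T') ≤ (1+ε)G(T), and |T'| ≤ (1+ε)|T|, and suppose the conditional barycenter μ of G on T satisfies (μ − inf T)/|T| = δ. Then the conditional barycenter μ' of G restricted to T' satisfies inf T < μ' < sup T, i.e., μ' belongs to T. -/

import Mathlib

open MeasureTheory Set

/-- Conditional barycenter of a measure on a set. -/
noncomputable def condBary (μ : Measure ℝ) (A : Set ℝ) : ℝ :=
  (∫ x in A, x ∂μ) / (μ A).toReal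

set_option maxHeartbeats 800000 in
/-- Fix `0 < δ < 1` and `ε > 0` with `ε(1+ε)² < min{δ, 1−δ}`. Let `G` be a probability measure
on a compact interval, `T = [a,b] ⊆ T' = [c,d]` nested non-degenerate compact intervals with
`G(T) > 0`, `G(T') ≤ (1+ε)G(T)` and `|T'| ≤ (1+ε)|T|`, and suppose the conditional barycenter
`μ_T` satisfies `(μ_T − inf T)/|T| = δ`. Then the conditional barycenter of `G` on `T'`
lies strictly between `inf T` and `sup T`, i.e. it belongs to `T`. -/
theorem stmt_4 (δ ε : ℝ) (hδ0 : 0 < δ) (hδ1 : δ < 1) (hε : 0 < ε)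
    (hcond : ε * (1 + ε) ^ 2 < min δ (1 - δ))
    (μ : Measure ℝ) [IsProbabilityMeasure μ]
    (u v : ℝ) (hμuv : μ ((Set.Icc u v)ᶜ) = 0)
    (a b c d : ℝ) (hca : c ≤ a) (hab : a < b) (hbd : b ≤ d)
    (hGT : 0 < μ (Set.Icc a b))
    (hG' : (μ (Set.Icc c d)).toReal ≤ (1 + ε) * (μ (Set.Icc a b)).toReal)
    (hlen : d - c ≤ (1 + ε) * (b - a))
    (hδdef : (condBary μ (Set.Icc a b) - a) / (b - a) = δ) :
    a < condBary μ (Set.Icc c d) ∧ condBary μ (Set.Icc c d) < b := by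
  -- integrability of the identity
  have hae : ∀ᵐ x ∂μ, x ∈ Set.Icc u v := MeasureTheory.mem_ae_iff.mpr hμuv
  have hInt : Integrable (fun x : ℝ => x) μ := by
    refine Integrable.mono' (integrable_const (max |u| |v|))
      measurable_id.aestronglyMeasurable ?_
    filter_upwards [hae] with x hx
    simp only [Real.norm_eq_abs]
    rcases abs_le_max_abs_abs hx.1 hx.2 with h
    exact h
  set S : Set ℝ := Set.Icc c d \ Set.Icc a b with hS
  have hsub : Set.Icc a b ⊆ Set.Icc c d := Set.Icc_subset_Icc hca hbd
  have hmeasS : MeasurableSet S := measurableSet_Icc.diff measurableSet_Icc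
  have hdisj : Disjoint (Set.Icc a b) S := disjoint_sdiff_right
  have hunion : Set.Icc a b ∪ S = Set.Icc c d := Set.union_diff_cancel hsub
  set m : ℝ := (μ (Set.Icc a b)).toReal with hm
  set m' : ℝ := (μ (Set.Icc c d)).toReal with hm'
  set μS : ℝ := (μ S).toReal with hμS
  have hm0 : 0 < m := ENNReal.toReal_pos hGT.ne' (measure_ne_top μ _)
  have hμS0 : 0 ≤ μS := ENNReal.toReal_nonneg
  have hmadd : m' = m + μS := by
    rw [hm', hm, hμS, ← hunion, measure_union hdisj hmeasS,
      ENNReal.toReal_add (measure_ne_top μ _) (measure_ne_top μ _)]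
  have hm'0 : 0 < m' := by rw [hmadd]; linarith
  set I : ℝ := ∫ x in Set.Icc a b, x ∂μ with hI
  set IS : ℝ := ∫ x in S, x ∂μ with hIS
  have hIadd : (∫ x in Set.Icc c d, x ∂μ) = I + IS := by
    rw [← hunion, setIntegral_union hdisj hmeasS hInt.integrableOn hInt.integrableOn]
  -- bounds for IS
  have hISlow : c * μS ≤ IS := by
    have h1 : ∫ x in S, c ∂μ ≤ ∫ x in S, x ∂μ :=
      setIntegral_mono_on (integrableOn_const (measure_lt_top μ S).ne)
        hInt.integrableOn hmeasS (fun x hx => hx.1.1)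
    rwa [setIntegral_const, smul_eq_mul, mul_comm] at h1
  have hIShigh : IS ≤ d * μS := by
    have h1 : ∫ x in S, x ∂μ ≤ ∫ x in S, d ∂μ :=
      setIntegral_mono_on hInt.integrableOn
        (integrableOn_const (measure_lt_top μ S).ne)
        hmeasS (fun x hx => hx.1.2)
    rwa [setIntegral_const, smul_eq_mul, mul_comm] at h1
  -- barycenter of T
  have hba : (0:ℝ) < b - a := by linarith
  have hIval : I = m * a + δ * (b - a) * m := by
    have h := hδdef
    rw [condBary] at h
    field_simp at h
    rw [← hI, ← hm] at h
    have h2 : I / m = a + (b - a) * δ := by linarith [h]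
    rw [div_eq_iff hm0.ne'] at h2
    rw [h2]; ring
  -- auxiliary inequalities
  have h1 : a - c ≤ ε * (b - a) := by nlinarith [hlen]
  have h2 : d - b ≤ ε * (b - a) := by nlinarith [hlen]
  have h3 : μS ≤ ε * m := by linarith [hG', hmadd]
  have h4 : (a - c) * μS ≤ (ε * (b - a)) * (ε * m) :=
    mul_le_mul h1 h3 hμS0 (by positivity)
  have h5 : (d - b) * μS ≤ (ε * (b - a)) * (ε * m) :=
    mul_le_mul h2 h3 hμS0 (by positivity)
  have hε2δ : ε * ε < δ := by
    have := lt_of_lt_of_le hcond (min_le_left _ _)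
    nlinarith
  have hε2δ' : ε * ε < 1 - δ := by
    have := lt_of_lt_of_le hcond (min_le_right _ _)
    nlinarith
  have key1 : ε * ε * ((b - a) * m) < δ * ((b - a) * m) :=
    mul_lt_mul_of_pos_right hε2δ (mul_pos hba hm0)
  have key2 : ε * ε * ((b - a) * m) < (1 - δ) * ((b - a) * m) :=
    mul_lt_mul_of_pos_right hε2δ' (mul_pos hba hm0)
  constructor
  · rw [condBary, hIadd, lt_div_iff₀ hm'0, hmadd]
    nlinarith [hIval, hISlow, h4, key1]
  · rw [condBary, hIadd, div_lt_iff₀ hm'0, hmadd]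
    nlinarith [hIval, hIShigh, h5, key2]
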